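/- Let β > 0, m ∈ ℕ, n ∈ ℕ with n ≥ 1, and a, b, c, d ∈ ℝ. Set μ² = m² + n², let γ > 0, and let Z : ℝ → ℝ be either Z(z) = cos(γz) with β·cos γ = γ·sin γ, or Z(z) = sin(γz) with β·sin γ = −γ·cos γ. Set λ = μ² + γ² and define u = (u₁, u₂, u₃) : ℝ³ → ℝ³ by u₁(x,y,z) = Z(z)·P^u_{m,n}(x,y), u₂(x,y,z) = −(m/n)·Z(z)·P^v_{m,n}(x,y), u₃ = 0. Then for all (x,y,z): (i) ∂ₓu₁ + ∂_yu₂ + ∂_zu₃ = 0; (ii) Δu_j = −λ·u_j for j = 1,2,3 (componentwise Laplacian in (x,y,z)); (iii) ∂_zu_j(x,y,1) + β·u_j(x,y,1) = 0 and −∂_zu_j(x,y,−1) + β·u_j(x,y,−1) = 0 for j = 1,2. -/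

import Mathlib

open Real

/-- The periodic profile 𝒫ᵘ_{m,n}. -/
noncomputable def Pu (m n : ℕ) (a b c d : ℝ) (x y : ℝ) : ℝ :=
  a * Real.cos (m * x) * Real.sin (n * y) - b * Real.sin (m * x) * Real.sin (n * y)
    - c * Real.sin (m * x) * Real.cos (n * y) + d * Real.cos (m * x) * Real.cos (n * y)

/-- The periodic profile 𝒫ᵛ_{m,n}. -/
noncomputable def Pv (m n : ℕ) (a b c d : ℝ) (x y : ℝ) : ℝ :=
  a * Real.sin (m * x) * Real.cos (n * y) + b * Real.cos (m * x) * Real.cos (n * y)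
    - c * Real.cos (m * x) * Real.sin (n * y) - d * Real.sin (m * x) * Real.sin (n * y)

lemma hD (A B k : ℝ) (x : ℝ) :
    HasDerivAt (fun t => A * Real.cos (k*t) + B * Real.sin (k*t))
      (-(A*k) * Real.sin (k*x) + B*k * Real.cos (k*x)) x := by
  have h1 : HasDerivAt (fun t : ℝ => k*t) k x := by
    simpa using (hasDerivAt_id x).const_mul k
  have hc := (Real.hasDerivAt_cos (k*x)).comp x h1
  have hs := (Real.hasDerivAt_sin (k*x)).comp x h1
  have := (hc.const_mul A).add (hs.const_mul B)
  exact this.congr_deriv (by ring)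

lemma d1 (A B k x : ℝ) : deriv (fun t => A * Real.cos (k*t) + B * Real.sin (k*t)) x
    = -(A*k) * Real.sin (k*x) + B*k * Real.cos (k*x) := (hD A B k x).deriv

lemma d2 (A B k x : ℝ) : deriv (deriv (fun t => A * Real.cos (k*t) + B * Real.sin (k*t))) x
    = -(k^2) * (A * Real.cos (k*x) + B * Real.sin (k*x)) := by
  have h : deriv (fun t => A * Real.cos (k*t) + B * Real.sin (k*t))
      = fun t => (B*k) * Real.cos (k*t) + (-(A*k)) * Real.sin (k*t) := by
    funext t; rw [d1]; ring
  rw [h, d1]; ring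

/-- The constant-pressure fields u = (Z(z)𝒫ᵘ, −(m/n)Z(z)𝒫ᵛ, 0) are divergence-free
eigenfunctions of the Stokes operator with eigenvalue λ = μ² + γ², satisfying the
Navier slip-with-friction boundary conditions at z = ±1. -/
theorem stmt_14 (β : ℝ) (hβ : 0 < β) (m n : ℕ) (hn : 1 ≤ n) (a b c d : ℝ)
    (γ : ℝ) (hγ : 0 < γ) (Z : ℝ → ℝ)
    (hZ : ((Z = fun z => Real.cos (γ * z)) ∧ β * Real.cos γ = γ * Real.sin γ) ∨
          ((Z = fun z => Real.sin (γ * z)) ∧ β * Real.sin γ = -(γ * Real.cos γ)))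
    (lam : ℝ) (hlam : lam = ((m : ℝ) ^ 2 + (n : ℝ) ^ 2) + γ ^ 2)
    (u₁ u₂ u₃ : ℝ → ℝ → ℝ → ℝ)
    (hu₁ : ∀ x y z, u₁ x y z = Z z * Pu m n a b c d x y)
    (hu₂ : ∀ x y z, u₂ x y z = -((m : ℝ) / (n : ℝ)) * Z z * Pv m n a b c d x y)
    (hu₃ : ∀ x y z, u₃ x y z = 0) :
    (∀ x y z : ℝ,
      deriv (fun x' => u₁ x' y z) x + deriv (fun y' => u₂ x y' z) y
        + deriv (fun z' => u₃ x y z') z = 0) ∧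
    (∀ x y z : ℝ,
      (deriv (deriv (fun x' => u₁ x' y z)) x + deriv (deriv (fun y' => u₁ x y' z)) y
        + deriv (deriv (fun z' => u₁ x y z')) z = -lam * u₁ x y z) ∧
      (deriv (deriv (fun x' => u₂ x' y z)) x + deriv (deriv (fun y' => u₂ x y' z)) y
        + deriv (deriv (fun z' => u₂ x y z')) z = -lam * u₂ x y z) ∧
      (deriv (deriv (fun x' => u₃ x' y z)) x + deriv (deriv (fun y' => u₃ x y' z)) y
        + deriv (deriv (fun z' => u₃ x y z')) z = -lam * u₃ x y z)) ∧
    (∀ x y : ℝ,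
      (deriv (fun z => u₁ x y z) 1 + β * u₁ x y 1 = 0) ∧
      (deriv (fun z => u₂ x y z) 1 + β * u₂ x y 1 = 0) ∧
      (-deriv (fun z => u₁ x y z) (-1) + β * u₁ x y (-1) = 0) ∧
      (-deriv (fun z => u₂ x y z) (-1) + β * u₂ x y (-1) = 0)) := by

  obtain ⟨A, B, hZf, hbc1, hbc2⟩ :
      ∃ A B : ℝ, Z = (fun t => A * Real.cos (γ*t) + B * Real.sin (γ*t)) ∧
        γ*(-A*Real.sin γ + B*Real.cos γ) + β*(A*Real.cos γ + B*Real.sin γ) = 0 ∧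
        -(γ*(A*Real.sin γ + B*Real.cos γ)) + β*(A*Real.cos γ - B*Real.sin γ) = 0 := by
    rcases hZ with ⟨hf, hc⟩ | ⟨hf, hc⟩
    · exact ⟨1, 0, by funext t; simp [hf], by linear_combination hc, by linear_combination hc⟩
    · exact ⟨0, 1, by funext t; simp [hf], by linear_combination hc, by linear_combination -hc⟩
  subst hZf
  have hn' : (n:ℝ) ≠ 0 := Nat.cast_ne_zero.mpr (by omega)
  refine ⟨?_, ?_, ?_⟩
  · intro x y z
    have e1 : (fun x' => u₁ x' y z)
        = fun t => ((A*Real.cos (γ*z)+B*Real.sin (γ*z)) * (a*Real.sin (↑n*y)+d*Real.cos (↑n*y)))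
            * Real.cos (↑m*t)
          + ((A*Real.cos (γ*z)+B*Real.sin (γ*z)) * (-(b*Real.sin (↑n*y))-c*Real.cos (↑n*y)))
            * Real.sin (↑m*t) := by
      funext t; simp only [hu₁, Pu]; ring
    have e2 : (fun y' => u₂ x y' z)
        = fun t => ((-((m:ℝ)/(n:ℝ)))*(A*Real.cos (γ*z)+B*Real.sin (γ*z))
              * (a*Real.sin (↑m*x)+b*Real.cos (↑m*x))) * Real.cos (↑n*t)
          + ((-((m:ℝ)/(n:ℝ)))*(A*Real.cos (γ*z)+B*Real.sin (γ*z))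
              * (-(c*Real.cos (↑m*x))-d*Real.sin (↑m*x))) * Real.sin (↑n*t) := by
      funext t; simp only [hu₂, Pv]; ring
    have e3 : (fun z' => u₃ x y z') = fun _ => (0:ℝ) := funext fun t => hu₃ x y t
    rw [e1, e2, e3, d1, d1, deriv_const]
    field_simp
    ring
  · intro x y z
    have e1 : (fun x' => u₁ x' y z)
        = fun t => ((A*Real.cos (γ*z)+B*Real.sin (γ*z)) * (a*Real.sin (↑n*y)+d*Real.cos (↑n*y)))
            * Real.cos (↑m*t)
          + ((A*Real.cos (γ*z)+B*Real.sin (γ*z)) * (-(b*Real.sin (↑n*y))-c*Real.cos (↑n*y)))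
            * Real.sin (↑m*t) := by
      funext t; simp only [hu₁, Pu]; ring
    have e1y : (fun y' => u₁ x y' z)
        = fun t => ((A*Real.cos (γ*z)+B*Real.sin (γ*z)) * (-(c*Real.sin (↑m*x))+d*Real.cos (↑m*x)))
            * Real.cos (↑n*t)
          + ((A*Real.cos (γ*z)+B*Real.sin (γ*z)) * (a*Real.cos (↑m*x)-b*Real.sin (↑m*x)))
            * Real.sin (↑n*t) := by
      funext t; simp only [hu₁, Pu]; ring
    have e1z : (fun z' => u₁ x y z')
        = fun t => (A * Pu m n a b c d x y) * Real.cos (γ*t)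
          + (B * Pu m n a b c d x y) * Real.sin (γ*t) := by
      funext t; simp only [hu₁]; ring
    have e2x : (fun x' => u₂ x' y z)
        = fun t => ((-((m:ℝ)/(n:ℝ)))*(A*Real.cos (γ*z)+B*Real.sin (γ*z))
              * (b*Real.cos (↑n*y)-c*Real.sin (↑n*y))) * Real.cos (↑m*t)
          + ((-((m:ℝ)/(n:ℝ)))*(A*Real.cos (γ*z)+B*Real.sin (γ*z))
              * (a*Real.cos (↑n*y)-d*Real.sin (↑n*y))) * Real.sin (↑m*t) := by
      funext t; simp only [hu₂, Pv]; ring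
    have e2y : (fun y' => u₂ x y' z)
        = fun t => ((-((m:ℝ)/(n:ℝ)))*(A*Real.cos (γ*z)+B*Real.sin (γ*z))
              * (a*Real.sin (↑m*x)+b*Real.cos (↑m*x))) * Real.cos (↑n*t)
          + ((-((m:ℝ)/(n:ℝ)))*(A*Real.cos (γ*z)+B*Real.sin (γ*z))
              * (-(c*Real.cos (↑m*x))-d*Real.sin (↑m*x))) * Real.sin (↑n*t) := by
      funext t; simp only [hu₂, Pv]; ring
    have e2z : (fun z' => u₂ x y z')
        = fun t => (A * ((-((m:ℝ)/(n:ℝ))) * Pv m n a b c d x y)) * Real.cos (γ*t)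
          + (B * ((-((m:ℝ)/(n:ℝ))) * Pv m n a b c d x y)) * Real.sin (γ*t) := by
      funext t; simp only [hu₂]; ring
    have e3 : ∀ w : ℝ → ℝ, (∀ t, w t = 0) → deriv (deriv w) = fun _ => (0:ℝ) := by
      intro w hw
      have : w = fun _ => (0:ℝ) := funext hw
      simp [this]
    refine ⟨?_, ?_, ?_⟩
    · rw [e1, e1y, e1z, d2, d2, d2, hu₁, hlam, Pu]; ring
    · rw [e2x, e2y, e2z, d2, d2, d2, hu₂, hlam, Pv]; ring
    · rw [e3 _ (fun t => hu₃ t y z), e3 _ (fun t => hu₃ x t z), e3 _ (fun t => hu₃ x y t),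
        hu₃]
      simp
  · intro x y
    have e1z : (fun z => u₁ x y z)
        = fun t => (A * Pu m n a b c d x y) * Real.cos (γ*t)
          + (B * Pu m n a b c d x y) * Real.sin (γ*t) := by
      funext t; simp only [hu₁]; ring
    have e2z : (fun z => u₂ x y z)
        = fun t => (A * ((-((m:ℝ)/(n:ℝ))) * Pv m n a b c d x y)) * Real.cos (γ*t)
          + (B * ((-((m:ℝ)/(n:ℝ))) * Pv m n a b c d x y)) * Real.sin (γ*t) := by
      funext t; simp only [hu₂]; ring
    refine ⟨?_, ?_, ?_, ?_⟩
    · rw [e1z, d1, hu₁]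
      simp only [mul_one]
      linear_combination Pu m n a b c d x y * hbc1
    · rw [e2z, d1, hu₂]
      simp only [mul_one]
      linear_combination (-((m:ℝ)/(n:ℝ))) * Pv m n a b c d x y * hbc1
    · rw [e1z, d1, hu₁]
      simp only [mul_neg_one, Real.sin_neg, Real.cos_neg]
      linear_combination Pu m n a b c d x y * hbc2
    · rw [e2z, d1, hu₂]
      simp only [mul_neg_one, Real.sin_neg, Real.cos_neg]
      linear_combination (-((m:ℝ)/(n:ℝ))) * Pv m n a b c d x y * hbc2
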